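/- With the definitions and assumptions in the context, the following hold: (a) for each j ∈ {1,…,ν}, underbar-S_{*_j} ⊆ S_{*_j} ⊆ S̄_{*_j} ⊆ S_s, where underbar-S_{*_j} = {x : h̄_{*_j}(x) ≥ (1/2)·T_s·l_φ·l_s}; and (b) underbar-S_* ⊆ S_* ⊆ S̄_* ⊆ S_s, where underbar-S_* = {x : h̄_*(x) ≥ (1/2)·T_s·l_φ·l_s}. -/

import Mathlib

open Set

lemma near_sample (N : ℕ) (Ts τ : ℝ) (hTs : 0 < Ts) (h0 : 0 ≤ τ) (h1 : τ ≤ (N:ℝ) * Ts) :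
    ∃ i ∈ Finset.range (N + 1), |τ - (i : ℝ) * Ts| ≤ Ts / 2 := by
  set m : ℤ := round (τ / Ts) with hm
  have hd0 : 0 ≤ τ / Ts := div_nonneg h0 hTs.le
  have hdN : τ / Ts ≤ (N : ℝ) := by
    rw [div_le_iff₀ hTs]; exact h1
  have hm0 : 0 ≤ m := by
    rw [hm, round_eq]
    exact Int.le_floor.mpr (by push_cast; linarith)
  have hmN : m ≤ (N : ℤ) := by
    rw [hm, round_eq]
    have : ⌊τ / Ts + 1 / 2⌋ < (N : ℤ) + 1 := Int.floor_lt.mpr (by push_cast; linarith)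
    omega
  refine ⟨m.toNat, Finset.mem_range.mpr (by omega), ?_⟩
  have hcast : ((m.toNat : ℕ) : ℝ) = (m : ℝ) := by
    exact_mod_cast congrArg (Int.cast : ℤ → ℝ) (Int.toNat_of_nonneg hm0)
  have habs : |τ / Ts - (m : ℝ)| ≤ 1 / 2 := abs_sub_round (τ / Ts)
  have : τ - (m : ℝ) * Ts = (τ / Ts - (m : ℝ)) * Ts := by
    field_simp
  rw [hcast, this, abs_mul, abs_of_pos hTs]
  calc |τ / Ts - (m:ℝ)| * Ts ≤ (1/2) * Ts := by
        exact mul_le_mul_of_nonneg_right habs hTs.le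
    _ = Ts / 2 := by ring


/-- With `ν` backup semiflows `φ_j` on `ℝ^n`, safe set `S_s = {h_s ≥ 0}`,
backup safe sets `S_{b_j} = {h_{b_j} ≥ 0} ⊆ S_s` forward invariant under `φ_j`,
`h_{*_j}(x) = min{h_{b_j}(φ_j(x,T)), inf_{τ∈[0,T]} h_s(φ_j(x,τ))}` (so `x ∈ S_{*_j}` iff
`h_{b_j}(φ_j(x,T)) ≥ 0` and `h_s(φ_j(x,τ)) ≥ 0` for all `τ ∈ [0,T]`),
`S_* = {x : max_j h_{*_j}(x) ≥ 0}` (i.e. `x ∈ S_*` iff `x ∈ S_{*_j}` for some `j`),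
`T_s = T/N`, `h̄_{*_j}`, `h̄_* = max_j h̄_{*_j}`, `S̄_{*_j}`, `S̄_*` the sampled versions,
`h_s` Lipschitz with constant `l_s > 0`, and `τ ↦ φ_j(x,τ)` Lipschitz on `[0,T]` with
constant `l_φ > 0`: (a) for each `j`, `underbar-S_{*_j} ⊆ S_{*_j} ⊆ S̄_{*_j} ⊆ S_s`
where `underbar-S_{*_j} = {x : h̄_{*_j}(x) ≥ (1/2)·T_s·l_φ·l_s}`, and
(b) `underbar-S_* ⊆ S_* ⊆ S̄_* ⊆ S_s` where
`underbar-S_* = {x : h̄_*(x) ≥ (1/2)·T_s·l_φ·l_s}`. -/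
theorem multi_backup_set_inclusions
    (n ν : ℕ) (hn : 0 < n) (hν : 0 < ν)
    (hs : EuclideanSpace ℝ (Fin n) → ℝ)
    (Ss : Set (EuclideanSpace ℝ (Fin n)))
    (hSs : Ss = {x | 0 ≤ hs x})
    (φ : Fin ν → EuclideanSpace ℝ (Fin n) → ℝ → EuclideanSpace ℝ (Fin n))
    (hφ0 : ∀ j x, φ j x 0 = x)
    (hφadd : ∀ (j : Fin ν) (x : EuclideanSpace ℝ (Fin n)) (s t : ℝ), 0 ≤ s → 0 ≤ t →
      φ j x (s + t) = φ j (φ j x s) t)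
    (hb : Fin ν → EuclideanSpace ℝ (Fin n) → ℝ)
    (Sb : Fin ν → Set (EuclideanSpace ℝ (Fin n)))
    (hSb : ∀ j, Sb j = {x | 0 ≤ hb j x})
    (hsub : ∀ j, Sb j ⊆ Ss)
    (hinv : ∀ j, ∀ x ∈ Sb j, ∀ t : ℝ, 0 ≤ t → φ j x t ∈ Sb j)
    (T : ℝ) (hT : 0 < T)
    (Sstarj : Fin ν → Set (EuclideanSpace ℝ (Fin n)))
    (hSstarj : ∀ j, Sstarj j =
      {x | 0 ≤ hb j (φ j x T) ∧ ∀ τ ∈ Icc (0:ℝ) T, 0 ≤ hs (φ j x τ)})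
    (Sstar : Set (EuclideanSpace ℝ (Fin n)))
    (hSstar : Sstar = {x | ∃ j : Fin ν, x ∈ Sstarj j})
    (N : ℕ) (hN : 0 < N) (Ts : ℝ) (hTs : Ts = T / N)
    (hbarStarj : Fin ν → EuclideanSpace ℝ (Fin n) → ℝ)
    (hhbarStarj : ∀ j x, hbarStarj j x =
      min (hb j (φ j x ((N : ℝ) * Ts)))
        ((Finset.range (N + 1)).inf' Finset.nonempty_range_add_one
          (fun i => hs (φ j x ((i : ℝ) * Ts)))))
    (hbarStar : EuclideanSpace ℝ (Fin n) → ℝ)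
    (hhbarStar : ∀ x, hbarStar x =
      Finset.univ.sup' ⟨⟨0, hν⟩, Finset.mem_univ _⟩ (fun j => hbarStarj j x))
    (SbarStarj : Fin ν → Set (EuclideanSpace ℝ (Fin n)))
    (hSbarStarj : ∀ j, SbarStarj j = {x | 0 ≤ hbarStarj j x})
    (SbarStar : Set (EuclideanSpace ℝ (Fin n)))
    (hSbarStar : SbarStar = {x | 0 ≤ hbarStar x})
    (ls lφ : ℝ) (hls : 0 < ls) (hlφ : 0 < lφ)
    (hlip_s : ∀ x y : EuclideanSpace ℝ (Fin n), |hs x - hs y| ≤ ls * ‖x - y‖)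
    (hlip_φ : ∀ j, ∀ x : EuclideanSpace ℝ (Fin n), ∀ τ₁ ∈ Icc (0:ℝ) T, ∀ τ₂ ∈ Icc (0:ℝ) T,
      ‖φ j x τ₁ - φ j x τ₂‖ ≤ lφ * |τ₁ - τ₂|)
    (ubarSstarj : Fin ν → Set (EuclideanSpace ℝ (Fin n)))
    (hubarSstarj : ∀ j, ubarSstarj j = {x | (1 / 2) * Ts * lφ * ls ≤ hbarStarj j x})
    (ubarSstar : Set (EuclideanSpace ℝ (Fin n)))
    (hubarSstar : ubarSstar = {x | (1 / 2) * Ts * lφ * ls ≤ hbarStar x}) :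
    (∀ j : Fin ν, ubarSstarj j ⊆ Sstarj j ∧ Sstarj j ⊆ SbarStarj j ∧ SbarStarj j ⊆ Ss) ∧
    (ubarSstar ⊆ Sstar ∧ Sstar ⊆ SbarStar ∧ SbarStar ⊆ Ss) := by

  -- basic facts
  have hNpos : (0:ℝ) < (N:ℝ) := by exact_mod_cast hN
  have hTs0 : 0 < Ts := by rw [hTs]; positivity
  have hNTs : (N : ℝ) * Ts = T := by rw [hTs]; field_simp
  have hε0 : 0 ≤ (1 / 2) * Ts * lφ * ls := by positivity
  -- sample points are in [0,T]
  have hsamp : ∀ i ∈ Finset.range (N + 1), (i : ℝ) * Ts ∈ Icc (0:ℝ) T := by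
    intro i hi
    have hiN : (i : ℝ) ≤ (N : ℝ) := by
      exact_mod_cast Nat.lt_succ_iff.mp (Finset.mem_range.mp hi)
    constructor
    · positivity
    · rw [← hNTs]; exact mul_le_mul_of_nonneg_right hiN hTs0.le
  -- C : SbarStarj j ⊆ Ss
  have hC : ∀ j, SbarStarj j ⊆ Ss := by
    intro j x hx
    simp only [hSbarStarj, Set.mem_setOf_eq, hhbarStarj] at hx
    have h2 := le_trans hx (min_le_right _ _)
    have h3 : 0 ≤ hs (φ j x ((((0:ℕ)) : ℝ) * Ts)) :=
      le_trans h2 (Finset.inf'_le _ (Finset.mem_range.mpr (Nat.succ_pos N)))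
    simp only [Nat.cast_zero, zero_mul, hφ0] at h3
    rw [hSs]; exact h3
  -- B : Sstarj j ⊆ SbarStarj j
  have hB : ∀ j, Sstarj j ⊆ SbarStarj j := by
    intro j x hx
    rw [hSstarj] at hx
    obtain ⟨h1, h2⟩ := hx
    rw [hSbarStarj, Set.mem_setOf_eq, hhbarStarj]
    refine le_min ?_ ?_
    · rw [hNTs]; exact h1
    · exact Finset.le_inf' _ _ (fun i hi => h2 _ (hsamp i hi))
  -- A : ubarSstarj j ⊆ Sstarj j
  have hA : ∀ j, ubarSstarj j ⊆ Sstarj j := by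
    intro j x hx
    simp only [hubarSstarj, Set.mem_setOf_eq, hhbarStarj] at hx
    have h1 : (1 / 2) * Ts * lφ * ls ≤ hb j (φ j x ((N:ℝ) * Ts)) :=
      le_trans hx (min_le_left _ _)
    have h2 : ∀ i ∈ Finset.range (N + 1),
        (1 / 2) * Ts * lφ * ls ≤ hs (φ j x ((i : ℝ) * Ts)) := by
      intro i hi
      exact le_trans (le_trans hx (min_le_right _ _)) (Finset.inf'_le _ hi)
    rw [hSstarj]
    constructor
    · rw [← hNTs]; linarith
    · intro τ hτ
      obtain ⟨hτ0, hτT⟩ := hτ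
      obtain ⟨i, hi, hnear⟩ := near_sample N Ts τ hTs0 hτ0 (by rw [hNTs]; exact hτT)
      have hiIcc := hsamp i hi
      have e1 := hlip_s (φ j x τ) (φ j x ((i:ℝ) * Ts))
      have e2 := hlip_φ j x τ ⟨hτ0, hτT⟩ ((i:ℝ) * Ts) hiIcc
      have e3 : hs (φ j x ((i:ℝ)*Ts)) - hs (φ j x τ) ≤
          ls * ‖φ j x τ - φ j x ((i:ℝ)*Ts)‖ := by
        have := neg_abs_le (hs (φ j x τ) - hs (φ j x ((i:ℝ)*Ts)))
        linarith
      have e4 : ls * ‖φ j x τ - φ j x ((i:ℝ)*Ts)‖ ≤ ls * (lφ * |τ - (i:ℝ)*Ts|) :=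
        mul_le_mul_of_nonneg_left e2 hls.le
      have e5 : ls * (lφ * |τ - (i:ℝ)*Ts|) ≤ ls * (lφ * (Ts/2)) := by
        have : lφ * |τ - (i:ℝ)*Ts| ≤ lφ * (Ts/2) :=
          mul_le_mul_of_nonneg_left hnear hlφ.le
        exact mul_le_mul_of_nonneg_left this hls.le
      have hkey := h2 i hi
      nlinarith [hkey]
  refine ⟨fun j => ⟨hA j, hB j, hC j⟩, ?_, ?_, ?_⟩
  · intro x hx
    rw [hubarSstar, Set.mem_setOf_eq, hhbarStar] at hx
    obtain ⟨j, _, hj⟩ := Finset.exists_mem_eq_sup' ⟨⟨0, hν⟩, Finset.mem_univ _⟩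
      (fun j => hbarStarj j x)
    rw [hSstar]
    refine ⟨j, hA j ?_⟩
    rw [hubarSstarj]
    rw [hj] at hx
    exact hx
  · intro x hx
    rw [hSstar] at hx
    obtain ⟨j, hj⟩ := hx
    have := hB j hj
    rw [hSbarStarj] at this
    rw [hSbarStar, Set.mem_setOf_eq, hhbarStar]
    exact le_trans this (Finset.le_sup' (fun j => hbarStarj j x) (Finset.mem_univ j))
  · intro x hx
    rw [hSbarStar, Set.mem_setOf_eq, hhbarStar] at hx
    obtain ⟨j, _, hj⟩ := Finset.exists_mem_eq_sup' ⟨⟨0, hν⟩, Finset.mem_univ _⟩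
      (fun j => hbarStarj j x)
    rw [hj] at hx
    exact hC j (by rw [hSbarStarj]; exact hx)
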